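/- With the notation of the model, for all η ∈ V and n ∈ ℕ one has [F, b∘c] η_n = −λ q^{2n} λ_n (Tη)_{n−1} + λ q^{2n+2} λ_{n+1} (Sη)_{n+1}, where [F, X] := F∘X − X∘F. -/
import Mathlib


/-- `lam q n = λ_n = (1 - q^(2n))^(1/2)`, so `lam q 0 = 0`. -/
noncomputable def lam (q : ℝ) (n : ℕ) : ℝ := Real.sqrt (1 - q ^ (2 * n))

/-- Section 6 of the paper: the commutator `[F, π(y₀)]` for `y₀ = bc`, a generator of the Podles sphere algebra `𝒪(S²_q)`. -/
theorem commutator_F_bc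
    (q : ℝ) (hq0 : 0 < q) (hq1 : q < 1)
    (V : Type*) [AddCommGroup V] [Module ℂ V]
    (w : V ≃ₗ[ℂ] V) (T S R : V →ₗ[ℂ] V)
    (hT : ∀ η : V, w (T (w.symm η)) = (q : ℂ) • T η)
    (hS : ∀ η : V, w (S (w.symm η)) = (q : ℂ) • S η)
    (hR : ∀ η : V, w (w (R (w.symm (w.symm η)))) + ((q ^ 2 : ℝ) : ℂ) • R η
            = ((1 + q ^ 2 : ℝ) : ℂ) • w (R (w.symm η)))
    (a b c d F : (ℕ →₀ V) →ₗ[ℂ] (ℕ →₀ V))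
    (ha : ∀ (η : V) (n : ℕ),
      a (Finsupp.single n η) = (lam q n : ℂ) • Finsupp.single (n - 1) η)
    (hb : ∀ (η : V) (n : ℕ),
      b (Finsupp.single n η) = -(((q ^ (n + 1) : ℝ)) : ℂ) • Finsupp.single n (w.symm η))
    (hc : ∀ (η : V) (n : ℕ),
      c (Finsupp.single n η) = ((q ^ n : ℝ) : ℂ) • Finsupp.single n (w η))
    (hd : ∀ (η : V) (n : ℕ),
      d (Finsupp.single n η) = (lam q (n + 1) : ℂ) • Finsupp.single (n + 1) η)
    (hF : ∀ (η : V) (n : ℕ),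
      F (Finsupp.single n η) = (lam q n : ℂ) • Finsupp.single (n - 1) (T η)
        + Finsupp.single n ((w ^ n) (R ((w.symm ^ n) η)))
        + (lam q (n + 1) : ℂ) • Finsupp.single (n + 1) (S η))
    :
    ∀ (η : V) (n : ℕ),
      (F ∘ₗ (b ∘ₗ c) - (b ∘ₗ c) ∘ₗ F) (Finsupp.single n η)
        = -(((q - q⁻¹) * q ^ (2 * n) * lam q n : ℝ) : ℂ) • Finsupp.single (n - 1) (T η)
          + (((q - q⁻¹) * q ^ (2 * n + 2) * lam q (n + 1) : ℝ) : ℂ) •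
              Finsupp.single (n + 1) (S η) := by
  have hbc : ∀ (ξ : V) (m : ℕ), b (c (Finsupp.single m ξ))
      = -(((q ^ (2*m+1) : ℝ)) : ℂ) • Finsupp.single m ξ := by
    intro ξ m
    rw [hc, map_smul, hb]
    simp only [LinearEquiv.symm_apply_apply, smul_smul]
    congr 1
    push_cast
    ring
  intro η n
  simp only [LinearMap.sub_apply, LinearMap.comp_apply]
  rw [hbc η n]
  simp only [map_add, map_smul, hF, hbc]
  have hq0' : (q : ℂ) ≠ 0 := by exact_mod_cast hq0.ne'
  match_scalars
  · rcases n with _ | m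
    · simp [lam]
    · push_cast
      field_simp [hq0']
      ring
  · push_cast; ring
  · push_cast
    field_simp [hq0']
    ring
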